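/- Suppose Φ ≺ 0. Then there exists M > 0, depending only on N, a, δ, τ, K, P₁, P₂, P₃, S, R, such that every continuously differentiable function x : [0,∞) → ℝ^{N+1} satisfying the delay differential equation ẋ(t) = A x(t) + B K x(t−τ) for all t ≥ τ obeys |x(t)| ≤ M e^{−δt} · sup_{s∈[0,τ]}(|x(s)| + |ẋ(s)|) for all t ≥ 0. -/

import Mathlib

open Matrix

/-- The diagonal matrix `A = diag(a - λ₀, …, a - λ_N)` with `λₙ = (nπ)²`. -/
noncomputable def Amat (N : ℕ) (a : ℝ) : Matrix (Fin (N + 1)) (Fin (N + 1)) ℝ :=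
  Matrix.diagonal fun n : Fin (N + 1) => a - ((n : ℕ) * Real.pi) ^ 2

/-- The column vector `B` with `B₀ = 1` and `Bₙ = (-1)ⁿ√2` for `1 ≤ n ≤ N`. -/
noncomputable def Bmat (N : ℕ) : Matrix (Fin (N + 1)) (Fin 1) ℝ :=
  Matrix.of fun i _ => if (i : ℕ) = 0 then (1 : ℝ) else (-1 : ℝ) ^ (i : ℕ) * Real.sqrt 2

/-- The symmetric 3(N+1)×3(N+1) block matrix `Φ` from the LMI of Theorem 2 (le2). -/
noncomputable def Phi (N : ℕ) (a δ τ : ℝ) (K : Matrix (Fin 1) (Fin (N + 1)) ℝ)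
    (P₁ P₂ P₃ S R : Matrix (Fin (N + 1)) (Fin (N + 1)) ℝ) :
    Matrix (Fin (N + 1) ⊕ (Fin (N + 1) ⊕ Fin (N + 1)))
      (Fin (N + 1) ⊕ (Fin (N + 1) ⊕ Fin (N + 1))) ℝ :=
  let A := Amat N a
  let BK := Bmat N * K
  let Φ11 := Aᵀ * P₂ + P₂ᵀ * A + (2 * δ) • P₁ + S - Real.exp (-2 * δ * τ) • R
  let Φ12 := P₁ - P₂ᵀ + Aᵀ * P₃
  let Φ13 := Real.exp (-2 * δ * τ) • R + P₂ᵀ * BK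
  let Φ22 := -P₃ - P₃ᵀ + τ ^ 2 • R
  let Φ23 := P₃ᵀ * BK
  let Φ33 := -(Real.exp (-2 * δ * τ)) • (S + R)
  Matrix.fromBlocks Φ11 (Matrix.fromCols Φ12 Φ13) (Matrix.fromRows Φ12ᵀ Φ13ᵀ)
    (Matrix.fromBlocks Φ22 Φ23 Φ23ᵀ Φ33)

section Helpers

lemma dotT {m n : Type*} [Fintype m] [Fintype n] (M : Matrix m n ℝ) (p : n → ℝ) (q : m → ℝ) :
    p ⬝ᵥ Mᵀ *ᵥ q = (M *ᵥ p) ⬝ᵥ q := by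
  rw [Matrix.mulVec_transpose, dotProduct_comm, ← Matrix.dotProduct_mulVec,
    dotProduct_comm]

lemma hasDerivAt_primitive (f : ℝ → ℝ) (hf : Continuous f) (u : ℝ) :
    HasDerivAt (fun v => ∫ s in (0:ℝ)..v, f s) (f u) u :=
  intervalIntegral.integral_hasDerivAt_right (hf.intervalIntegrable _ _)
    (hf.stronglyMeasurableAtFilter _ _) hf.continuousAt

lemma hasDerivAt_quad (n : ℕ) (P : Matrix (Fin (n+1)) (Fin (n+1)) ℝ)
    (f : ℝ → Fin (n+1) → ℝ) (v : Fin (n+1) → ℝ) (t : ℝ) (hf : HasDerivAt f v t) :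
    HasDerivAt (fun s => f s ⬝ᵥ P *ᵥ f s) (v ⬝ᵥ P *ᵥ f t + f t ⬝ᵥ P *ᵥ v) t := by
  have hc : ∀ i, HasDerivAt (fun s => f s i) (v i) t := fun i => hasDerivAt_pi.1 hf i
  have hinner : ∀ i : Fin (n+1), HasDerivAt (fun s => ∑ j, P i j * f s j) (∑ j, P i j * v j) t :=
    fun i => HasDerivAt.fun_sum (fun j _ => (hc j).const_mul _)
  have key := HasDerivAt.fun_sum (fun i (_ : i ∈ Finset.univ) =>
    (hc i).fun_mul (hinner i) : ∀ i ∈ Finset.univ, _)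
  simp only [dotProduct, Matrix.mulVec]
  exact key.congr_deriv Finset.sum_add_distrib

lemma quad_cont (n : ℕ) (P : Matrix (Fin (n+1)) (Fin (n+1)) ℝ) :
    Continuous fun v : Fin (n+1) → ℝ => v ⬝ᵥ P *ᵥ v := by
  unfold dotProduct Matrix.mulVec dotProduct
  fun_prop

lemma quad_smul (n : ℕ) (P : Matrix (Fin (n+1)) (Fin (n+1)) ℝ) (c : ℝ) (v : Fin (n+1) → ℝ) :
    (c • v) ⬝ᵥ P *ᵥ (c • v) = c^2 * (v ⬝ᵥ P *ᵥ v) := by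
  rw [Matrix.mulVec_smul, dotProduct_smul, smul_dotProduct]
  simp [smul_eq_mul]; ring

lemma quad_bounds (n : ℕ) (P : Matrix (Fin (n+1)) (Fin (n+1)) ℝ) (hP : P.PosDef) :
    ∃ c C : ℝ, 0 < c ∧ ∀ v : Fin (n+1) → ℝ,
      c * ‖v‖^2 ≤ v ⬝ᵥ P *ᵥ v ∧ v ⬝ᵥ P *ᵥ v ≤ C * ‖v‖^2 := by
  set f : (Fin (n+1) → ℝ) → ℝ := fun v => v ⬝ᵥ P *ᵥ v with hf
  have hfc : Continuous f := quad_cont n P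
  have hcpt : IsCompact (Metric.sphere (0 : Fin (n+1) → ℝ) 1) := isCompact_sphere _ _
  have hne : (Metric.sphere (0 : Fin (n+1) → ℝ) 1).Nonempty :=
    NormedSpace.sphere_nonempty.mpr zero_le_one
  obtain ⟨v₀, hv₀, hmin⟩ := hcpt.exists_isMinOn hne hfc.continuousOn
  obtain ⟨v₁, hv₁, hmax⟩ := hcpt.exists_isMaxOn hne hfc.continuousOn
  refine ⟨f v₀, f v₁, ?_, ?_⟩
  · have : v₀ ≠ 0 := by
      intro h; rw [mem_sphere_iff_norm, h] at hv₀; simp at hv₀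
    have := hP.dotProduct_mulVec_pos this
    simpa using this
  · intro v
    rcases eq_or_ne v 0 with rfl | hv
    · simp [hf]
    · have hnorm : ‖v‖ ≠ 0 := norm_ne_zero_iff.mpr hv
      have hmem : (‖v‖⁻¹ • v) ∈ Metric.sphere (0 : Fin (n+1) → ℝ) 1 := by
        simp [norm_smul, inv_mul_cancel₀ hnorm]
      have h1 := hmin hmem
      have h2 := hmax hmem
      rw [Set.mem_setOf_eq] at h1 h2
      have hq : f (‖v‖⁻¹ • v) = (‖v‖⁻¹)^2 * f v := quad_smul n P _ v
      have hn2 : (0:ℝ) < ‖v‖^2 := by positivity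
      constructor
      · have : f v₀ ≤ (‖v‖⁻¹)^2 * f v := by rw [← hq]; exact h1
        calc f v₀ * ‖v‖^2 ≤ ((‖v‖⁻¹)^2 * f v) * ‖v‖^2 := by nlinarith
          _ = f v := by field_simp
      · have : (‖v‖⁻¹)^2 * f v ≤ f v₁ := by rw [← hq]; exact h2
        calc f v = ((‖v‖⁻¹)^2 * f v) * ‖v‖^2 := by field_simp
          _ ≤ f v₁ * ‖v‖^2 := by nlinarith

lemma sq_integral_le (a b : ℝ) (hab : a ≤ b) (f : ℝ → ℝ) (hf : Continuous f) :
    (∫ s in a..b, f s)^2 ≤ (b - a) * ∫ s in a..b, (f s)^2 := by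
  rcases eq_or_lt_of_le hab with rfl | hlt
  · simp
  set L : ℝ := b - a with hL
  have hL0 : 0 < L := by simp [hL]; linarith
  set I : ℝ := ∫ s in a..b, f s with hI
  have key : 0 ≤ ∫ s in a..b, (f s - I / L)^2 :=
    intervalIntegral.integral_nonneg hab (fun s _ => sq_nonneg _)
  have expand : ∫ s in a..b, (f s - I / L)^2
      = (∫ s in a..b, (f s)^2) - 2 * (I / L) * I + (I / L)^2 * L := by
    have h1 : ∀ s, (f s - I / L)^2 = (f s)^2 - (2 * (I / L)) * f s + (I / L)^2 := by
      intro s; ring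
    simp_rw [h1]
    rw [intervalIntegral.integral_add, intervalIntegral.integral_sub,
      intervalIntegral.integral_const_mul, intervalIntegral.integral_const]
    · simp [smul_eq_mul]; ring
    · exact (hf.pow 2).intervalIntegrable a b
    · exact (continuous_const.mul hf).intervalIntegrable a b
    · exact ((hf.pow 2).sub (continuous_const.mul hf)).intervalIntegrable a b
    · exact continuous_const.intervalIntegrable a b
  rw [expand] at key
  have : I^2 / L ≤ ∫ s in a..b, (f s)^2 := by
    have h2 : (I/L)^2 * L = I^2/L := by field_simp
    have h3 : 2 * (I/L) * I = 2 * (I^2/L) := by ring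
    rw [h2, h3] at key; linarith
  calc I^2 = (I^2 / L) * L := by field_simp
    _ ≤ (∫ s in a..b, (f s)^2) * L := by nlinarith
    _ = L * ∫ s in a..b, (f s)^2 := by ring

lemma jensen (n : ℕ) (R : Matrix (Fin (n+1)) (Fin (n+1)) ℝ) (hR : R.PosSemidef)
    (a b : ℝ) (hab : a ≤ b) (g : ℝ → Fin (n+1) → ℝ)
    (hg : ∀ j, Continuous fun s => g s j)
    (v : Fin (n+1) → ℝ) (hv : ∀ j, v j = ∫ s in a..b, g s j) :
    v ⬝ᵥ R *ᵥ v ≤ (b - a) * ∫ s in a..b, g s ⬝ᵥ R *ᵥ g s := by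
  obtain ⟨Q, hQh, hRQQ⟩ : ∃ Q : Matrix (Fin (n+1)) (Fin (n+1)) ℝ, Qᵀ = Q ∧ Q * Q = R := by
    open scoped MatrixOrder in
    refine ⟨CFC.sqrt R, ?_, CFC.sqrt_mul_sqrt_self R (Matrix.nonneg_iff_posSemidef.mpr hR)⟩
    rw [← Matrix.conjTranspose_eq_transpose_of_trivial]
    exact (Matrix.nonneg_iff_posSemidef.mp (CFC.sqrt_nonneg R)).1
  have quad : ∀ u : Fin (n+1) → ℝ, u ⬝ᵥ R *ᵥ u = (Q *ᵥ u) ⬝ᵥ (Q *ᵥ u) := by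
    intro u
    conv_lhs => rw [← hRQQ, ← Matrix.mulVec_mulVec]
    conv_lhs => rw [← hQh]
    rw [dotT, hQh]
  have hgi : ∀ i, Continuous fun s => (Q *ᵥ g s) i := by
    intro i
    simp only [Matrix.mulVec, dotProduct]
    exact continuous_finset_sum _ fun j _ => continuous_const.mul (hg j)
  have hcomp : ∀ i, (Q *ᵥ v) i = ∫ s in a..b, (Q *ᵥ g s) i := by
    intro i
    simp only [Matrix.mulVec, dotProduct, hv]
    rw [intervalIntegral.integral_finset_sum]
    · exact Finset.sum_congr rfl fun j _ => (intervalIntegral.integral_const_mul _ _).symm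
    · exact fun j _ => (continuous_const.mul (hg j)).intervalIntegrable a b
  rw [quad]
  have key : ∀ i : Fin (n+1), ((Q *ᵥ v) i)^2 ≤ (b - a) * ∫ s in a..b, ((Q *ᵥ g s) i)^2 := by
    intro i
    rw [hcomp i]
    exact sq_integral_le a b hab _ (hgi i)
  calc (Q *ᵥ v) ⬝ᵥ (Q *ᵥ v) = ∑ i, ((Q *ᵥ v) i)^2 := by
        simp [dotProduct, sq]
    _ ≤ ∑ i, (b - a) * ∫ s in a..b, ((Q *ᵥ g s) i)^2 := Finset.sum_le_sum fun i _ => key i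
    _ = (b - a) * ∑ i, ∫ s in a..b, ((Q *ᵥ g s) i)^2 := by rw [Finset.mul_sum]
    _ = (b - a) * ∫ s in a..b, ∑ i, ((Q *ᵥ g s) i)^2 := by
        rw [intervalIntegral.integral_finset_sum]
        exact fun i _ => ((hgi i).pow 2).intervalIntegrable a b
    _ = (b - a) * ∫ s in a..b, g s ⬝ᵥ R *ᵥ g s := by
        congr 1; apply intervalIntegral.integral_congr; intro s _
        show ∑ i, ((Q *ᵥ g s) i)^2 = g s ⬝ᵥ R *ᵥ g s
        rw [quad (g s)]; simp [dotProduct, sq]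

lemma phi_quad (N : ℕ) (a δ τ : ℝ) (K : Matrix (Fin 1) (Fin (N + 1)) ℝ)
    (P₁ P₂ P₃ S R : Matrix (Fin (N + 1)) (Fin (N + 1)) ℝ)
    (hP₁ : P₁ᵀ = P₁) (hS : Sᵀ = S) (hR : Rᵀ = R)
    (u v w : Fin (N + 1) → ℝ) :
    Sum.elim u (Sum.elim v w) ⬝ᵥ (Phi N a δ τ K P₁ P₂ P₃ S R) *ᵥ Sum.elim u (Sum.elim v w)
      = 2 * δ * (u ⬝ᵥ P₁ *ᵥ u) + 2 * (u ⬝ᵥ P₁ *ᵥ v) + u ⬝ᵥ S *ᵥ u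
        - Real.exp (-2 * δ * τ) * (w ⬝ᵥ S *ᵥ w) + τ ^ 2 * (v ⬝ᵥ R *ᵥ v)
        - Real.exp (-2 * δ * τ) * ((u - w) ⬝ᵥ R *ᵥ (u - w))
        + 2 * ((P₂ *ᵥ u + P₃ *ᵥ v) ⬝ᵥ ((Amat N a) *ᵥ u + (Bmat N * K) *ᵥ w - v)) := by
  have hd : ∀ {m n : Type} [Fintype m] [Fintype n] (M : Matrix m n ℝ) (p : n → ℝ) (q : m → ℝ),
      p ⬝ᵥ Mᵀ *ᵥ q = (M *ᵥ p) ⬝ᵥ q := by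
    intro m n _ _ M p q
    rw [Matrix.mulVec_transpose, dotProduct_comm]
    rw [← Matrix.dotProduct_mulVec, dotProduct_comm]
  simp only [Phi, Matrix.fromBlocks_mulVec, Matrix.fromCols_mulVec_sumElim,
    Matrix.fromRows_mulVec, sumElim_dotProduct_sumElim,
    Matrix.add_mulVec, Matrix.sub_mulVec, Matrix.neg_mulVec, Matrix.smul_mulVec,
    Matrix.mulVec_mulVec, dotProduct_add, dotProduct_sub, dotProduct_neg, dotProduct_smul,
    Matrix.transpose_add, Matrix.transpose_sub, Matrix.transpose_mul, Matrix.transpose_transpose,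
    Matrix.transpose_smul, Matrix.transpose_neg, hP₁, hS, hR, smul_eq_mul, Sum.elim_comp_inl,
    Sum.elim_comp_inr]
  simp only [← Matrix.mulVec_mulVec, hd, Matrix.mulVec_add, Matrix.mulVec_sub,
    dotProduct_add, dotProduct_sub, add_dotProduct, sub_dotProduct,
    dotProduct_comm (P₂ *ᵥ u), dotProduct_comm (P₃ *ᵥ v)]
  have hsym : v ⬝ᵥ P₁ *ᵥ u = u ⬝ᵥ P₁ *ᵥ v := by
    conv_lhs => rw [← hP₁]
    rw [hd, dotProduct_comm]
  rw [hsym]; ring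

end Helpers

set_option maxHeartbeats 2000000 in
/-- if `Φ ≺ 0`, every C¹ solution of the delay ODE
`ẋ(t) = A x(t) + B K x(t - τ)` (for `t ≥ τ`) decays like `M e^{-δ t}` times the size of
its initial data on `[0, τ]`, with `M` depending only on the fixed parameters. -/
theorem stmt1 (N : ℕ) (a δ τ : ℝ) (hδ : 0 < δ) (hτ : 0 < τ)
    (K : Matrix (Fin 1) (Fin (N + 1)) ℝ)
    (P₁ P₂ P₃ S R : Matrix (Fin (N + 1)) (Fin (N + 1)) ℝ)
    (hP₁ : P₁.PosDef) (hS : S.PosDef) (hR : R.PosDef)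
    (hΦ : (-(Phi N a δ τ K P₁ P₂ P₃ S R)).PosDef) :
    ∃ M > 0, ∀ x x' : ℝ → (Fin (N + 1) → ℝ),
      (∀ t, 0 ≤ t → HasDerivAt x (x' t) t) →
      ContinuousOn x' (Set.Ici 0) →
      (∀ t, τ ≤ t → x' t = (Amat N a).mulVec (x t) + (Bmat N * K).mulVec (x (t - τ))) →
      ∀ t, 0 ≤ t →
        ‖x t‖ ≤ M * Real.exp (-δ * t) *
          sSup ((fun s => ‖x s‖ + ‖x' s‖) '' Set.Icc (0 : ℝ) τ) := by
  have triv : ∀ (Q : Matrix (Fin (N+1)) (Fin (N+1)) ℝ), Q.IsHermitian → Qᵀ = Q := by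
    intro Q hQ
    rw [← Matrix.conjTranspose_eq_transpose_of_trivial]; exact hQ
  have hP₁t := triv P₁ hP₁.1
  have hSt := triv S hS.1
  have hRt := triv R hR.1
  obtain ⟨c₁, C₁, hc₁, hb₁⟩ := quad_bounds N P₁ hP₁
  obtain ⟨cS, CS, hcS, hbS⟩ := quad_bounds N S hS
  obtain ⟨cR, CR, hcR, hbR⟩ := quad_bounds N R hR
  have hCpos : ∀ (c C : ℝ) (P : Matrix (Fin (N+1)) (Fin (N+1)) ℝ), 0 < c →
      (∀ v : Fin (N+1) → ℝ, c * ‖v‖^2 ≤ v ⬝ᵥ P *ᵥ v ∧ v ⬝ᵥ P *ᵥ v ≤ C * ‖v‖^2) → 0 < C := by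
    intro c C P hc hb
    have hv : ((fun _ => 1 : Fin (N+1) → ℝ)) ≠ 0 := by
      intro hcontra
      have := congrFun hcontra 0
      simp at this
    have hn : 0 < ‖(fun _ => 1 : Fin (N+1) → ℝ)‖ := norm_pos_iff.mpr hv
    have hn2 : 0 < ‖(fun _ => 1 : Fin (N+1) → ℝ)‖^2 := by positivity
    obtain ⟨h1, h2⟩ := hb (fun _ => 1)
    nlinarith [mul_pos hc hn2]
  have hC₁ := hCpos c₁ C₁ P₁ hc₁ hb₁
  have hCS := hCpos cS CS S hcS hbS
  have hCR := hCpos cR CR R hcR hbR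
  -- the quadratic form of Φ is nonpositive
  have hΦneg : ∀ η, η ⬝ᵥ (Phi N a δ τ K P₁ P₂ P₃ S R) *ᵥ η ≤ 0 := by
    intro η
    rcases eq_or_ne η 0 with rfl | hη
    · simp
    · have := hΦ.dotProduct_mulVec_pos hη
      simp only [star_trivial, Matrix.neg_mulVec, dotProduct_neg] at this
      linarith
  set Ctot : ℝ := C₁ + τ * CS + τ^3 * CR with hCtotdef
  have hCtot : 0 < Ctot := by positivity
  set M : ℝ := (Real.sqrt (Ctot / c₁) + 1) * Real.exp (δ * τ) with hMdef
  have hMpos : 0 < M := by positivity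
  refine ⟨M, hMpos, ?_⟩
  intro x x' hdx hcx hode
  set D : ℝ := sSup ((fun s => ‖x s‖ + ‖x' s‖) '' Set.Icc (0:ℝ) τ) with hDdef
  have hxc : ContinuousOn x (Set.Ici (0:ℝ)) :=
    fun s hs => ((hdx s hs).continuousAt).continuousWithinAt
  have hfc : ContinuousOn (fun s => ‖x s‖ + ‖x' s‖) (Set.Icc (0:ℝ) τ) :=
    ((hxc.mono Set.Icc_subset_Ici_self).norm.add ((hcx.mono Set.Icc_subset_Ici_self).norm))
  have hbdd : BddAbove ((fun s => ‖x s‖ + ‖x' s‖) '' Set.Icc (0:ℝ) τ) :=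
    (isCompact_Icc.image_of_continuousOn hfc).bddAbove
  have hDub : ∀ s, 0 ≤ s → s ≤ τ → ‖x s‖ + ‖x' s‖ ≤ D :=
    fun s h0 h1 => le_csSup hbdd ⟨s, ⟨h0, h1⟩, rfl⟩
  have hDx : ∀ s, 0 ≤ s → s ≤ τ → ‖x s‖ ≤ D := by
    intro s h0 h1
    have h2 := hDub s h0 h1
    have h3 := norm_nonneg (x' s)
    linarith
  have hDx' : ∀ s, 0 ≤ s → s ≤ τ → ‖x' s‖ ≤ D := by
    intro s h0 h1
    have h2 := hDub s h0 h1
    have h3 := norm_nonneg (x s)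
    linarith
  have hD0 : 0 ≤ D := by
    have h2 := hDub 0 le_rfl hτ.le
    have h3 := norm_nonneg (x 0)
    have h4 := norm_nonneg (x' 0)
    linarith
  -- extended functions
  set xt : ℝ → Fin (N+1) → ℝ := fun s => x (max s 0) with hxtdef
  set y : ℝ → Fin (N+1) → ℝ := fun s => x' (max s 0) with hydef
  have hxtc : Continuous xt :=
    hxc.comp_continuous (continuous_id.max continuous_const) (fun s => le_max_right s 0)
  have hyc : Continuous y :=
    hcx.comp_continuous (continuous_id.max continuous_const) (fun s => le_max_right s 0)
  have hxt_eq : ∀ s, 0 ≤ s → xt s = x s := by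
    intro s hs; simp only [hxtdef]; rw [max_eq_left hs]
  have hy_eq : ∀ s, 0 ≤ s → y s = x' s := by
    intro s hs; simp only [hydef]; rw [max_eq_left hs]
  set g : ℝ → ℝ := fun s => xt s ⬝ᵥ S *ᵥ xt s with hgdef
  set h : ℝ → ℝ := fun s => y s ⬝ᵥ R *ᵥ y s with hhdef
  have hgc : Continuous g := (quad_cont N S).comp hxtc
  have hhc : Continuous h := (quad_cont N R).comp hyc
  have hg0 : ∀ s, 0 ≤ g s := by
    intro s
    have h1 := (hbS (xt s)).1
    have h2 : (0:ℝ) ≤ cS * ‖xt s‖^2 := by positivity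
    simp only [hgdef]; linarith
  have hh0 : ∀ s, 0 ≤ h s := by
    intro s
    have h1 := (hbR (y s)).1
    have h2 : (0:ℝ) ≤ cR * ‖y s‖^2 := by positivity
    simp only [hhdef]; linarith
  have hgb : ∀ s, 0 ≤ s → s ≤ τ → g s ≤ CS * D^2 := by
    intro s h0 h1
    have h2 := (hbS (xt s)).2
    have h3 : ‖xt s‖ ≤ D := by rw [hxt_eq s h0]; exact hDx s h0 h1
    have h4 : ‖xt s‖^2 ≤ D^2 := by nlinarith [norm_nonneg (xt s)]
    simp only [hgdef]; nlinarith
  have hhb : ∀ s, 0 ≤ s → s ≤ τ → h s ≤ CR * D^2 := by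
    intro s h0 h1
    have h2 := (hbR (y s)).2
    have h3 : ‖y s‖ ≤ D := by rw [hy_eq s h0]; exact hDx' s h0 h1
    have h4 : ‖y s‖^2 ≤ D^2 := by nlinarith [norm_nonneg (y s)]
    simp only [hhdef]; nlinarith
  -- primitives
  have hφGc : Continuous fun s : ℝ => Real.exp (2*δ*s) * g s :=
    ((Real.continuous_exp.comp (continuous_const.mul continuous_id)).mul hgc)
  have hφHc : Continuous fun s : ℝ => Real.exp (2*δ*s) * h s :=
    ((Real.continuous_exp.comp (continuous_const.mul continuous_id)).mul hhc)
  have hφH₂c : Continuous fun s : ℝ => s * (Real.exp (2*δ*s) * h s) :=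
    continuous_id.mul hφHc
  set G : ℝ → ℝ := fun u => ∫ s in (0:ℝ)..u, Real.exp (2*δ*s) * g s with hGdef
  set H : ℝ → ℝ := fun u => ∫ s in (0:ℝ)..u, Real.exp (2*δ*s) * h s with hHdef
  set H₂ : ℝ → ℝ := fun u => ∫ s in (0:ℝ)..u, s * (Real.exp (2*δ*s) * h s) with hH₂def
  have hGd : ∀ u, HasDerivAt G (Real.exp (2*δ*u) * g u) u :=
    fun u => hasDerivAt_primitive _ hφGc u
  have hHd : ∀ u, HasDerivAt H (Real.exp (2*δ*u) * h u) u :=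
    fun u => hasDerivAt_primitive _ hφHc u
  have hH₂d : ∀ u, HasDerivAt H₂ (u * (Real.exp (2*δ*u) * h u)) u :=
    fun u => hasDerivAt_primitive _ hφH₂c u
  have hGc : Continuous G := by
    rw [continuous_iff_continuousAt]; exact fun u => (hGd u).continuousAt
  have hHc : Continuous H := by
    rw [continuous_iff_continuousAt]; exact fun u => (hHd u).continuousAt
  have hH₂c : Continuous H₂ := by
    rw [continuous_iff_continuousAt]; exact fun u => (hH₂d u).continuousAt
  -- the Lyapunov functional
  set V : ℝ → ℝ := fun t => xt t ⬝ᵥ P₁ *ᵥ xt t + Real.exp (-2*δ*t) * (G t - G (t - τ))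
      + τ * Real.exp (-2*δ*t) * ((τ - t) * (H t - H (t - τ)) + (H₂ t - H₂ (t - τ))) with hVdef
  set W : ℝ → ℝ := fun t => Real.exp (2*δ*t) * V t with hWdef
  have hsubc : Continuous fun s : ℝ => s - τ := continuous_id.sub continuous_const
  have hexpc : Continuous fun s : ℝ => Real.exp (-2*δ*s) :=
    Real.continuous_exp.comp (continuous_const.mul continuous_id)
  have hVc : Continuous V := by
    apply Continuous.add
    apply Continuous.add
    · exact (quad_cont N P₁).comp hxtc
    · exact hexpc.mul (hGc.sub (hGc.comp hsubc))
    · exact (continuous_const.mul hexpc).mul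
        (((continuous_const.sub continuous_id).mul (hHc.sub (hHc.comp hsubc))).add
          (hH₂c.sub (hH₂c.comp hsubc)))
  have hWc : Continuous W :=
    (Real.continuous_exp.comp (continuous_const.mul continuous_id)).mul hVc
  -- derivative of xt at positive points
  have hxds : ∀ s, 0 < s → HasDerivAt xt (x' s) s := by
    intro s hs
    refine (hdx s hs.le).congr_of_eventuallyEq ?_
    filter_upwards [Ioi_mem_nhds hs] with u hu
    exact hxt_eq u (le_of_lt hu)
  -- key derivative bound
  have key : ∀ t, τ < t → ∃ d, HasDerivAt W d t ∧ d ≤ 0 := by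
    intro t ht
    have h0t : (0:ℝ) < t := lt_trans hτ ht
    have h0tτ : (0:ℝ) < t - τ := by linarith
    have hxdt : HasDerivAt xt (x' t) t := hxds t h0t
    have hV1 : HasDerivAt (fun s => xt s ⬝ᵥ P₁ *ᵥ xt s)
        (x' t ⬝ᵥ P₁ *ᵥ xt t + xt t ⬝ᵥ P₁ *ᵥ x' t) t := hasDerivAt_quad N P₁ xt (x' t) t hxdt
    have hE : HasDerivAt (fun s : ℝ => Real.exp (-2*δ*s)) ((-2*δ) * Real.exp (-2*δ*t)) t := by
      have h1 := (hasDerivAt_id t).const_mul (-2*δ)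
      have h2 := h1.exp
      convert h2 using 1
      show _ = Real.exp (-2*δ*t) * (-2*δ*1); ring
      rfl
    have hE2 : HasDerivAt (fun s : ℝ => Real.exp (2*δ*s)) ((2*δ) * Real.exp (2*δ*t)) t := by
      have h1 := (hasDerivAt_id t).const_mul (2*δ)
      have h2 := h1.exp
      convert h2 using 1
      show _ = Real.exp (2*δ*t) * (2*δ*1); ring
      rfl
    have hshift : HasDerivAt (fun s : ℝ => s - τ) 1 t := (hasDerivAt_id t).sub_const τ
    have hGsub : HasDerivAt (fun s => G s - G (s - τ))
        (Real.exp (2*δ*t) * g t - Real.exp (2*δ*(t-τ)) * g (t-τ)) t := by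
      refine (hGd t).sub ?_
      have := (hGd (t - τ)).comp t hshift
      simpa [Function.comp_def] using this
    have hHsub : HasDerivAt (fun s => H s - H (s - τ))
        (Real.exp (2*δ*t) * h t - Real.exp (2*δ*(t-τ)) * h (t-τ)) t := by
      refine (hHd t).sub ?_
      have := (hHd (t - τ)).comp t hshift
      simpa [Function.comp_def] using this
    have hH₂sub : HasDerivAt (fun s => H₂ s - H₂ (s - τ))
        (t * (Real.exp (2*δ*t) * h t) - (t-τ) * (Real.exp (2*δ*(t-τ)) * h (t-τ))) t := by
      refine (hH₂d t).sub ?_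
      have := (hH₂d (t - τ)).comp t hshift
      simpa [Function.comp_def] using this
    have hV2 : HasDerivAt (fun s => Real.exp (-2*δ*s) * (G s - G (s - τ)))
        ((-2*δ) * Real.exp (-2*δ*t) * (G t - G (t - τ))
          + Real.exp (-2*δ*t) * (Real.exp (2*δ*t) * g t - Real.exp (2*δ*(t-τ)) * g (t-τ))) t :=
      hE.mul hGsub
    have hlin : HasDerivAt (fun s : ℝ => τ - s) (-1) t := by
      simpa using (hasDerivAt_id t).const_sub τ
    have hinner : HasDerivAt (fun s => (τ - s) * (H s - H (s - τ)) + (H₂ s - H₂ (s - τ)))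
        ((-1) * (H t - H (t - τ))
          + (τ - t) * (Real.exp (2*δ*t) * h t - Real.exp (2*δ*(t-τ)) * h (t-τ))
          + (t * (Real.exp (2*δ*t) * h t) - (t-τ) * (Real.exp (2*δ*(t-τ)) * h (t-τ)))) t := by
      exact (hlin.mul hHsub).add hH₂sub
    have hτE : HasDerivAt (fun s : ℝ => τ * Real.exp (-2*δ*s))
        (τ * ((-2*δ) * Real.exp (-2*δ*t))) t := hE.const_mul τ
    have hV3 : HasDerivAt (fun s => τ * Real.exp (-2*δ*s)
          * ((τ - s) * (H s - H (s - τ)) + (H₂ s - H₂ (s - τ))))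
        (τ * ((-2*δ) * Real.exp (-2*δ*t))
            * ((τ - t) * (H t - H (t - τ)) + (H₂ t - H₂ (t - τ)))
          + τ * Real.exp (-2*δ*t)
            * ((-1) * (H t - H (t - τ))
              + (τ - t) * (Real.exp (2*δ*t) * h t - Real.exp (2*δ*(t-τ)) * h (t-τ))
              + (t * (Real.exp (2*δ*t) * h t) - (t-τ) * (Real.exp (2*δ*(t-τ)) * h (t-τ))))) t :=
      hτE.mul hinner
    have hVd : HasDerivAt V
        ((x' t ⬝ᵥ P₁ *ᵥ xt t + xt t ⬝ᵥ P₁ *ᵥ x' t)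
          + ((-2*δ) * Real.exp (-2*δ*t) * (G t - G (t - τ))
            + Real.exp (-2*δ*t) * (Real.exp (2*δ*t) * g t - Real.exp (2*δ*(t-τ)) * g (t-τ)))
          + (τ * ((-2*δ) * Real.exp (-2*δ*t))
              * ((τ - t) * (H t - H (t - τ)) + (H₂ t - H₂ (t - τ)))
            + τ * Real.exp (-2*δ*t)
              * ((-1) * (H t - H (t - τ))
                + (τ - t) * (Real.exp (2*δ*t) * h t - Real.exp (2*δ*(t-τ)) * h (t-τ))
                + (t * (Real.exp (2*δ*t) * h t) - (t-τ) * (Real.exp (2*δ*(t-τ)) * h (t-τ)))))) t := by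
      rw [hVdef]
      exact (hV1.add hV2).add hV3
    have hWd : HasDerivAt W
        ((2*δ) * Real.exp (2*δ*t) * V t + Real.exp (2*δ*t)
          * ((x' t ⬝ᵥ P₁ *ᵥ xt t + xt t ⬝ᵥ P₁ *ᵥ x' t)
          + ((-2*δ) * Real.exp (-2*δ*t) * (G t - G (t - τ))
            + Real.exp (-2*δ*t) * (Real.exp (2*δ*t) * g t - Real.exp (2*δ*(t-τ)) * g (t-τ)))
          + (τ * ((-2*δ) * Real.exp (-2*δ*t))
              * ((τ - t) * (H t - H (t - τ)) + (H₂ t - H₂ (t - τ)))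
            + τ * Real.exp (-2*δ*t)
              * ((-1) * (H t - H (t - τ))
                + (τ - t) * (Real.exp (2*δ*t) * h t - Real.exp (2*δ*(t-τ)) * h (t-τ))
                + (t * (Real.exp (2*δ*t) * h t) - (t-τ) * (Real.exp (2*δ*(t-τ)) * h (t-τ))))))) t := by
      rw [hWdef]
      exact hE2.mul hVd
    refine ⟨_, hWd, ?_⟩
    have hEne : Real.exp (2*δ*t) ≠ 0 := Real.exp_ne_zero _
    have hc1 : Real.exp (2*δ*(t-τ)) = Real.exp (2*δ*t) * Real.exp (-2*δ*τ) := by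
      rw [← Real.exp_add]; congr 1; ring
    have hc2 : Real.exp (-2*δ*t) = (Real.exp (2*δ*t))⁻¹ := by
      rw [← Real.exp_neg]; congr 1; ring
    set Ω : ℝ := 2*δ*(xt t ⬝ᵥ P₁ *ᵥ xt t) + (x' t ⬝ᵥ P₁ *ᵥ xt t + xt t ⬝ᵥ P₁ *ᵥ x' t)
        + g t - Real.exp (-2*δ*τ) * g (t-τ) + τ^2 * h t
        - τ * Real.exp (-2*δ*t) * (H t - H (t - τ)) with hΩdef
    have hred : (2*δ) * Real.exp (2*δ*t) * V t + Real.exp (2*δ*t)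
          * ((x' t ⬝ᵥ P₁ *ᵥ xt t + xt t ⬝ᵥ P₁ *ᵥ x' t)
          + ((-2*δ) * Real.exp (-2*δ*t) * (G t - G (t - τ))
            + Real.exp (-2*δ*t) * (Real.exp (2*δ*t) * g t - Real.exp (2*δ*(t-τ)) * g (t-τ)))
          + (τ * ((-2*δ) * Real.exp (-2*δ*t))
              * ((τ - t) * (H t - H (t - τ)) + (H₂ t - H₂ (t - τ)))
            + τ * Real.exp (-2*δ*t)
              * ((-1) * (H t - H (t - τ))
                + (τ - t) * (Real.exp (2*δ*t) * h t - Real.exp (2*δ*(t-τ)) * h (t-τ))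
                + (t * (Real.exp (2*δ*t) * h t) - (t-τ) * (Real.exp (2*δ*(t-τ)) * h (t-τ))))))
        = Real.exp (2*δ*t) * Ω := by
      rw [hΩdef]
      simp only [hVdef]
      rw [hc1, hc2]
      field_simp
      ring
    rw [hred]
    have htτ0 : (0:ℝ) ≤ t - τ := by linarith
    have hxt_t : xt t = x t := hxt_eq t h0t.le
    have hxt_tτ : xt (t-τ) = x (t-τ) := hxt_eq _ htτ0
    have hyt : y t = x' t := hy_eq t h0t.le
    have hHint : H t - H (t - τ) = ∫ s in (t-τ)..t, Real.exp (2*δ*s) * h s := by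
      simp only [hHdef]
      exact intervalIntegral.integral_interval_sub_left (hφHc.intervalIntegrable _ _)
        (hφHc.intervalIntegrable _ _)
    have hmono : Real.exp (2*δ*(t-τ)) * ∫ s in (t-τ)..t, h s
        ≤ ∫ s in (t-τ)..t, Real.exp (2*δ*s) * h s := by
      rw [← intervalIntegral.integral_const_mul]
      apply intervalIntegral.integral_mono_on (by linarith)
        ((continuous_const.mul hhc).intervalIntegrable _ _) (hφHc.intervalIntegrable _ _)
      intro s hs
      have h1 : Real.exp (2*δ*(t-τ)) ≤ Real.exp (2*δ*s) := by
        apply Real.exp_le_exp.mpr; nlinarith [hs.1]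
      show Real.exp (2*δ*(t-τ)) * h s ≤ Real.exp (2*δ*s) * h s
      nlinarith [hh0 s, Real.exp_pos (2*δ*(t-τ))]
    have hveq : ∀ j, (x t - x (t-τ)) j = ∫ s in (t-τ)..t, y s j := by
      intro j
      have hderiv : ∀ s ∈ Set.uIcc (t-τ) t, HasDerivAt (fun u => xt u j) (y s j) s := by
        intro s hs
        rw [Set.uIcc_of_le (by linarith)] at hs
        have hs0 : 0 < s := lt_of_lt_of_le h0tτ hs.1
        have hpi := hasDerivAt_pi.1 (hxds s hs0) j
        rw [hy_eq s hs0.le]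
        exact hpi
      have hint : IntervalIntegrable (fun s => y s j) MeasureTheory.volume (t-τ) t :=
        ((continuous_apply j).comp hyc).intervalIntegrable _ _
      have hftc := intervalIntegral.integral_eq_sub_of_hasDerivAt hderiv hint
      rw [hftc, hxt_t, hxt_tτ]
      simp
    have hjen := jensen N R hR.posSemidef (t-τ) t (by linarith) y
        (fun j => (continuous_apply j).comp hyc) (x t - x (t-τ)) hveq
    have hjen' : (x t - x (t-τ)) ⬝ᵥ R *ᵥ (x t - x (t-τ)) ≤ τ * ∫ s in (t-τ)..t, h s := by
      have h5 : t - (t-τ) = τ := by ring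
      rw [h5] at hjen
      exact hjen
    have hRbound : Real.exp (-2*δ*τ) * ((x t - x (t-τ)) ⬝ᵥ R *ᵥ (x t - x (t-τ)))
        ≤ τ * Real.exp (-2*δ*t) * (H t - H (t - τ)) := by
      rw [hHint]
      have e1 : (0:ℝ) ≤ τ * Real.exp (-2*δ*t) := by positivity
      have e2 := mul_le_mul_of_nonneg_left hmono e1
      have e3 : Real.exp (-2*δ*t) * Real.exp (2*δ*(t-τ)) = Real.exp (-2*δ*τ) := by
        rw [← Real.exp_add]; congr 1; ring
      have e4 : Real.exp (-2*δ*τ) * ((x t - x (t-τ)) ⬝ᵥ R *ᵥ (x t - x (t-τ)))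
          ≤ Real.exp (-2*δ*τ) * (τ * ∫ s in (t-τ)..t, h s) :=
        mul_le_mul_of_nonneg_left hjen' (Real.exp_nonneg _)
      have e5 : Real.exp (-2*δ*τ) * (τ * ∫ s in (t-τ)..t, h s)
          = τ * Real.exp (-2*δ*t) * (Real.exp (2*δ*(t-τ)) * ∫ s in (t-τ)..t, h s) := by
        rw [← e3]; ring
      calc Real.exp (-2*δ*τ) * ((x t - x (t-τ)) ⬝ᵥ R *ᵥ (x t - x (t-τ)))
          ≤ Real.exp (-2*δ*τ) * (τ * ∫ s in (t-τ)..t, h s) := e4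
        _ = τ * Real.exp (-2*δ*t) * (Real.exp (2*δ*(t-τ)) * ∫ s in (t-τ)..t, h s) := e5
        _ ≤ τ * Real.exp (-2*δ*t) * ∫ s in (t-τ)..t, Real.exp (2*δ*s) * h s := by
            calc τ * Real.exp (-2*δ*t) * (Real.exp (2*δ*(t-τ)) * ∫ s in (t-τ)..t, h s)
                = τ * Real.exp (-2*δ*t) * Real.exp (2*δ*(t-τ)) * ∫ s in (t-τ)..t, h s := by ring
              _ ≤ _ := by
                  have := mul_le_mul_of_nonneg_left hmono e1
                  calc τ * Real.exp (-2*δ*t) * Real.exp (2*δ*(t-τ)) * ∫ s in (t-τ)..t, h s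
                      = τ * Real.exp (-2*δ*t) * (Real.exp (2*δ*(t-τ)) * ∫ s in (t-τ)..t, h s) := by
                        ring
                    _ ≤ τ * Real.exp (-2*δ*t) * ∫ s in (t-τ)..t, Real.exp (2*δ*s) * h s := this
    have hd0vec : (Amat N a) *ᵥ (x t) + (Bmat N * K) *ᵥ (x (t-τ)) - x' t = 0 :=
      sub_eq_zero_of_eq (hode t ht.le).symm
    have hquad := phi_quad N a δ τ K P₁ P₂ P₃ S R hP₁t hSt hRt (x t) (x' t) (x (t-τ))
    have hsym2 : x' t ⬝ᵥ P₁ *ᵥ x t = x t ⬝ᵥ P₁ *ᵥ x' t := by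
      conv_lhs => rw [← hP₁t]
      rw [dotT, dotProduct_comm]
    have hΦle := hΦneg (Sum.elim (x t) (Sum.elim (x' t) (x (t-τ))))
    rw [hquad, hd0vec] at hΦle
    simp only [dotProduct_zero, mul_zero, add_zero] at hΦle
    have hgt : g t = x t ⬝ᵥ S *ᵥ x t := by simp only [hgdef]; rw [hxt_t]
    have hgtτ : g (t-τ) = x (t-τ) ⬝ᵥ S *ᵥ x (t-τ) := by simp only [hgdef]; rw [hxt_tτ]
    have hht : h t = x' t ⬝ᵥ R *ᵥ x' t := by simp only [hhdef]; rw [hyt]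
    have hΩval : Ω = 2*δ*(x t ⬝ᵥ P₁ *ᵥ x t) + 2*(x t ⬝ᵥ P₁ *ᵥ x' t) + x t ⬝ᵥ S *ᵥ x t
        - Real.exp (-2*δ*τ) * (x (t-τ) ⬝ᵥ S *ᵥ x (t-τ)) + τ^2 * (x' t ⬝ᵥ R *ᵥ x' t)
        - τ * Real.exp (-2*δ*t) * (H t - H (t - τ)) := by
      rw [hΩdef, hgt, hgtτ, hht, hxt_t, hsym2]; ring
    have hΩle : Ω ≤ 0 := by
      rw [hΩval]
      have hE2τ : Real.exp (-2 * δ * τ) = Real.exp (-2*δ*τ) := by norm_num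
      linarith [hΦle, hRbound]
    exact mul_nonpos_iff.mpr (Or.inl ⟨le_of_lt (Real.exp_pos _), hΩle⟩)
  -- Gronwall
  have hanti : AntitoneOn W (Set.Ici τ) := by
    apply antitoneOn_of_deriv_nonpos (convex_Ici τ) hWc.continuousOn
    · intro s hs
      rw [interior_Ici] at hs
      obtain ⟨d, hd, _⟩ := key s hs
      exact hd.differentiableAt.differentiableWithinAt
    · intro s hs
      rw [interior_Ici] at hs
      obtain ⟨d, hd, hd0⟩ := key s hs
      rw [hd.deriv]; exact hd0
  -- conclusion
  have hinv : ∀ b : ℝ, Real.exp (-2*δ*b) * Real.exp (2*δ*b) = 1 := by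
    intro b
    rw [← Real.exp_add, show -2*δ*b + 2*δ*b = 0 by ring, Real.exp_zero]
  intro t ht0
  rcases le_or_gt t τ with hcase | hcase
  · -- initial interval
    have h1 : ‖x t‖ ≤ D := hDx t ht0 hcase
    have h2 : Real.exp (δ*τ) * Real.exp (-δ*τ) = 1 := by
      rw [← Real.exp_add, show δ*τ + -δ*τ = 0 by ring, Real.exp_zero]
    have h3 : Real.exp (-δ*τ) ≤ Real.exp (-δ*t) := Real.exp_le_exp.mpr (by nlinarith)
    have h4 : M * Real.exp (-δ*τ) = Real.sqrt (Ctot/c₁) + 1 := by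
      rw [hMdef, mul_assoc, h2, mul_one]
    calc ‖x t‖ ≤ D := h1
      _ = 1 * D := (one_mul D).symm
      _ ≤ (Real.sqrt (Ctot/c₁) + 1) * D := by
          nlinarith [Real.sqrt_nonneg (Ctot/c₁), hD0]
      _ = M * Real.exp (-δ*τ) * D := by rw [h4]
      _ ≤ M * Real.exp (-δ*t) * D := by
          have h5 := mul_le_mul_of_nonneg_left h3 hMpos.le
          exact mul_le_mul_of_nonneg_right h5 hD0
  · -- decay region
    have htτ : τ ≤ t := hcase.le
    have hWle : W t ≤ W τ := hanti (Set.mem_Ici.mpr le_rfl) (Set.mem_Ici.mpr htτ) htτ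
    have htτ0 : (0:ℝ) ≤ t - τ := by linarith
    have hG2 : 0 ≤ G t - G (t - τ) := by
      have e1 : G t - G (t-τ) = ∫ s in (t-τ)..t, Real.exp (2*δ*s) * g s := by
        simp only [hGdef]
        exact intervalIntegral.integral_interval_sub_left (hφGc.intervalIntegrable _ _)
          (hφGc.intervalIntegrable _ _)
      rw [e1]
      apply intervalIntegral.integral_nonneg (by linarith)
      intro s _
      exact mul_nonneg (Real.exp_nonneg _) (hg0 s)
    have hIn3 : 0 ≤ (τ - t) * (H t - H (t - τ)) + (H₂ t - H₂ (t - τ)) := by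
      have e1 : H t - H (t-τ) = ∫ s in (t-τ)..t, Real.exp (2*δ*s) * h s := by
        simp only [hHdef]
        exact intervalIntegral.integral_interval_sub_left (hφHc.intervalIntegrable _ _)
          (hφHc.intervalIntegrable _ _)
      have e2 : H₂ t - H₂ (t-τ) = ∫ s in (t-τ)..t, s * (Real.exp (2*δ*s) * h s) := by
        simp only [hH₂def]
        exact intervalIntegral.integral_interval_sub_left (hφH₂c.intervalIntegrable _ _)
          (hφH₂c.intervalIntegrable _ _)
      rw [e1, e2, ← intervalIntegral.integral_const_mul, ← intervalIntegral.integral_add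
        ((continuous_const.fun_mul hφHc).intervalIntegrable _ _)
        (hφH₂c.intervalIntegrable _ _)]
      apply intervalIntegral.integral_nonneg (by linarith)
      intro s hs
      have h1 : (0:ℝ) ≤ τ - t + s := by linarith [hs.1]
      have h2 : 0 ≤ Real.exp (2*δ*s) * h s := mul_nonneg (Real.exp_nonneg _) (hh0 s)
      nlinarith
    have hVtlow : c₁ * ‖x t‖^2 ≤ V t := by
      have hq := (hb₁ (xt t)).1
      rw [hxt_eq t ht0] at hq
      have m1 : 0 ≤ Real.exp (-2*δ*t) * (G t - G (t - τ)) :=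
        mul_nonneg (Real.exp_nonneg _) hG2
      have m2 : 0 ≤ τ * Real.exp (-2*δ*t)
          * ((τ - t) * (H t - H (t - τ)) + (H₂ t - H₂ (t - τ))) :=
        mul_nonneg (by positivity) hIn3
      simp only [hVdef]
      rw [hxt_eq t ht0]
      linarith
    have hG0 : G 0 = 0 := by simp only [hGdef]; exact intervalIntegral.integral_same
    have hH0 : H 0 = 0 := by simp only [hHdef]; exact intervalIntegral.integral_same
    have hH₂0 : H₂ 0 = 0 := by simp only [hH₂def]; exact intervalIntegral.integral_same
    have hee : Real.exp (-2*δ*τ) * Real.exp (2*δ*τ) = 1 := hinv τ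
    have hq1 : xt τ ⬝ᵥ P₁ *ᵥ xt τ ≤ C₁ * D^2 := by
      have h2 := (hb₁ (xt τ)).2
      have h3 : ‖xt τ‖ ≤ D := by rw [hxt_eq τ hτ.le]; exact hDx τ hτ.le le_rfl
      have h4 : ‖xt τ‖^2 ≤ D^2 := by nlinarith [norm_nonneg (xt τ)]
      have h5 := mul_le_mul_of_nonneg_left h4 hC₁.le
      linarith
    have hGτ : G τ ≤ τ * (Real.exp (2*δ*τ) * (CS * D^2)) := by
      simp only [hGdef]
      calc ∫ s in (0:ℝ)..τ, Real.exp (2*δ*s) * g s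
          ≤ ∫ _s in (0:ℝ)..τ, Real.exp (2*δ*τ) * (CS * D^2) := by
            apply intervalIntegral.integral_mono_on hτ.le (hφGc.intervalIntegrable _ _)
              (continuous_const.intervalIntegrable _ _)
            intro s hs
            have e1 : Real.exp (2*δ*s) ≤ Real.exp (2*δ*τ) :=
              Real.exp_le_exp.mpr (by nlinarith [hs.2])
            have e2 := hgb s hs.1 hs.2
            nlinarith [hg0 s, Real.exp_pos (2*δ*s), Real.exp_pos (2*δ*τ)]
          _ = τ * (Real.exp (2*δ*τ) * (CS * D^2)) := by
            rw [intervalIntegral.integral_const]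
            simp [smul_eq_mul]
    have hH₂τ : H₂ τ ≤ τ * (τ * (Real.exp (2*δ*τ) * (CR * D^2))) := by
      simp only [hH₂def]
      calc ∫ s in (0:ℝ)..τ, s * (Real.exp (2*δ*s) * h s)
          ≤ ∫ _s in (0:ℝ)..τ, τ * (Real.exp (2*δ*τ) * (CR * D^2)) := by
            apply intervalIntegral.integral_mono_on hτ.le (hφH₂c.intervalIntegrable _ _)
              (continuous_const.intervalIntegrable _ _)
            intro s hs
            have e1 : Real.exp (2*δ*s) ≤ Real.exp (2*δ*τ) :=
              Real.exp_le_exp.mpr (by nlinarith [hs.2])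
            have e2 := hhb s hs.1 hs.2
            have e3 := hh0 s
            have p1 : Real.exp (2*δ*s) * h s ≤ Real.exp (2*δ*τ) * (CR * D^2) := by
              nlinarith [Real.exp_pos (2*δ*s), Real.exp_pos (2*δ*τ)]
            have p2 : 0 ≤ Real.exp (2*δ*s) * h s := mul_nonneg (Real.exp_nonneg _) e3
            exact mul_le_mul hs.2 p1 p2 hτ.le
          _ = τ * (τ * (Real.exp (2*δ*τ) * (CR * D^2))) := by
            rw [intervalIntegral.integral_const]
            simp [smul_eq_mul]
    have hVτ : V τ ≤ Ctot * D^2 := by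
      simp only [hVdef]
      rw [sub_self τ, hG0, hH0, hH₂0, sub_zero, sub_zero, sub_zero, zero_mul, zero_add]
      have b2 : Real.exp (-2*δ*τ) * G τ ≤ τ * CS * D^2 := by
        have h6 := mul_le_mul_of_nonneg_left hGτ (Real.exp_nonneg (-2*δ*τ))
        calc Real.exp (-2*δ*τ) * G τ
            ≤ Real.exp (-2*δ*τ) * (τ * (Real.exp (2*δ*τ) * (CS * D^2))) := h6
          _ = (Real.exp (-2*δ*τ) * Real.exp (2*δ*τ)) * (τ * CS * D^2) := by ring
          _ = τ * CS * D^2 := by rw [hee, one_mul]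
      have b3 : τ * Real.exp (-2*δ*τ) * H₂ τ ≤ τ^3 * CR * D^2 := by
        have h7 : (0:ℝ) ≤ τ * Real.exp (-2*δ*τ) := by positivity
        have h6 := mul_le_mul_of_nonneg_left hH₂τ h7
        calc τ * Real.exp (-2*δ*τ) * H₂ τ
            = τ * Real.exp (-2*δ*τ) * H₂ τ := rfl
          _ ≤ τ * Real.exp (-2*δ*τ) * (τ * (τ * (Real.exp (2*δ*τ) * (CR * D^2)))) := h6
          _ = (Real.exp (-2*δ*τ) * Real.exp (2*δ*τ)) * (τ^3 * CR * D^2) := by ring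
          _ = τ^3 * CR * D^2 := by rw [hee, one_mul]
      rw [hCtotdef]
      linarith
    have hkey2 : c₁ * ‖x t‖^2 ≤ Real.exp (-2*δ*t) * Real.exp (2*δ*τ) * (Ctot * D^2) := by
      have h1 : Real.exp (2*δ*t) * V t ≤ Real.exp (2*δ*τ) * V τ := by
        have e1 : W t = Real.exp (2*δ*t) * V t := by simp only [hWdef]
        have e2 : W τ = Real.exp (2*δ*τ) * V τ := by simp only [hWdef]
        rw [← e1, ← e2]; exact hWle
      have h2 : Real.exp (2*δ*τ) * V τ ≤ Real.exp (2*δ*τ) * (Ctot * D^2) :=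
        mul_le_mul_of_nonneg_left hVτ (Real.exp_nonneg _)
      have h4 : V t = Real.exp (-2*δ*t) * (Real.exp (2*δ*t) * V t) := by
        rw [← mul_assoc, hinv t, one_mul]
      calc c₁ * ‖x t‖^2 ≤ V t := hVtlow
        _ = Real.exp (-2*δ*t) * (Real.exp (2*δ*t) * V t) := h4
        _ ≤ Real.exp (-2*δ*t) * (Real.exp (2*δ*τ) * V τ) :=
            mul_le_mul_of_nonneg_left h1 (Real.exp_nonneg _)
        _ ≤ Real.exp (-2*δ*t) * (Real.exp (2*δ*τ) * (Ctot * D^2)) :=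
            mul_le_mul_of_nonneg_left h2 (Real.exp_nonneg _)
        _ = Real.exp (-2*δ*t) * Real.exp (2*δ*τ) * (Ctot * D^2) := by ring
    have hρ0 : (0:ℝ) ≤ Real.sqrt (Ctot/c₁) * Real.exp (δ*τ) * Real.exp (-δ*t) * D := by
      positivity
    have hsq : (Real.sqrt (Ctot/c₁) * Real.exp (δ*τ) * Real.exp (-δ*t) * D)^2
        = Ctot/c₁ * (Real.exp (2*δ*τ) * (Real.exp (-2*δ*t) * D^2)) := by
      have e1 : Real.sqrt (Ctot/c₁)^2 = Ctot/c₁ := Real.sq_sqrt (by positivity)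
      have e2 : Real.exp (δ*τ)^2 = Real.exp (2*δ*τ) := by
        rw [sq, ← Real.exp_add, show δ*τ + δ*τ = 2*δ*τ by ring]
      have e3 : Real.exp (-δ*t)^2 = Real.exp (-2*δ*t) := by
        rw [sq, ← Real.exp_add, show -δ*t + -δ*t = -2*δ*t by ring]
      rw [mul_pow, mul_pow, mul_pow, e1, e2, e3]
      ring
    have hx2 : ‖x t‖^2 ≤ (Real.sqrt (Ctot/c₁) * Real.exp (δ*τ) * Real.exp (-δ*t) * D)^2 := by
      rw [hsq, div_mul_eq_mul_div, le_div_iff₀ hc₁]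
      nlinarith [hkey2]
    have hxρ : ‖x t‖ ≤ Real.sqrt (Ctot/c₁) * Real.exp (δ*τ) * Real.exp (-δ*t) * D := by
      calc ‖x t‖ = Real.sqrt (‖x t‖^2) := (Real.sqrt_sq (norm_nonneg _)).symm
        _ ≤ Real.sqrt ((Real.sqrt (Ctot/c₁) * Real.exp (δ*τ) * Real.exp (-δ*t) * D)^2) :=
            Real.sqrt_le_sqrt hx2
        _ = Real.sqrt (Ctot/c₁) * Real.exp (δ*τ) * Real.exp (-δ*t) * D := Real.sqrt_sq hρ0
    calc ‖x t‖ ≤ Real.sqrt (Ctot/c₁) * Real.exp (δ*τ) * Real.exp (-δ*t) * D := hxρ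
      _ ≤ M * Real.exp (-δ*t) * D := by
          rw [hMdef]
          have h8 : (0:ℝ) ≤ Real.exp (δ*τ) * Real.exp (-δ*t) * D :=
            mul_nonneg (mul_nonneg (Real.exp_nonneg _) (Real.exp_nonneg _)) hD0
          nlinarith [h8]
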